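/- Let κ be a skewon-free medium tensor on ℝ⁴ with κ ∘ κ = −Id on 2-forms, and let 𝒜 be its associated 3×3 matrix. Then 𝒜 ≠ 0 and rank 𝒜 ≠ 2; that is, the rank of 𝒜 is either 1 or 3. Equivalently: for real 3×3 matrices 𝒜 = 𝒜ᵀ, ℬ = ℬᵀ and 𝒞 satisfying 𝒞² + 𝒜ℬ = −Id₃, ℬ𝒞 + 𝒞ᵀℬ = 0 and 𝒞𝒜 + 𝒜𝒞ᵀ = 0, the matrix 𝒜 is neither zero nor of rank 2. -/
import Mathlib


open scoped BigOperators
open Matrix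

noncomputable section

/-- The Levi-Civita symbol `ε_{ijkl}` on `{0,1,2,3}`. -/
def eps4 (i j k l : Fin 4) : ℝ :=
  (((j.val : ℝ) - (i.val : ℝ)) * ((k.val : ℝ) - (i.val : ℝ)) * ((l.val : ℝ) - (i.val : ℝ)) *
      ((k.val : ℝ) - (j.val : ℝ)) * ((l.val : ℝ) - (j.val : ℝ)) * ((l.val : ℝ) - (k.val : ℝ))) / 12

/-- A 2-form on ℝ⁴: an antisymmetric array of components. -/
def IsAlt (u : Fin 4 → Fin 4 → ℝ) : Prop := ∀ i j, u i j = - u j i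

/-- The components `κ i j k l = κ^{ij}_{kl}` form a medium tensor: antisymmetry in the
upper pair and in the lower pair. -/
def IsMedium (κ : Fin 4 → Fin 4 → Fin 4 → Fin 4 → ℝ) : Prop :=
  (∀ i j k l, κ i j k l = - κ j i k l) ∧ (∀ i j k l, κ i j k l = - κ i j l k)

/-- Action of a medium tensor on a 2-form: `(κ F)_{ij} = ½ κ^{rs}_{ij} F_{rs}`. -/
def act (κ : Fin 4 → Fin 4 → Fin 4 → Fin 4 → ℝ) (F : Fin 4 → Fin 4 → ℝ) (i j : Fin 4) : ℝ :=
  (1 / 2) * ∑ r, ∑ s, κ r s i j * F r s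

/-- Wedge pairing of two 2-forms: `u ∧ v = ¼ ε^{ijkl} u_{ij} v_{kl}`. -/
def wedge2 (u v : Fin 4 → Fin 4 → ℝ) : ℝ :=
  (1 / 4) * ∑ i, ∑ j, ∑ k, ∑ l, eps4 i j k l * u i j * v k l

/-- A medium tensor is skewon-free if `u ∧ κ(v) = κ(u) ∧ v` for all 2-forms `u, v`. -/
def SkewonFree (κ : Fin 4 → Fin 4 → Fin 4 → Fin 4 → ℝ) : Prop :=
  ∀ u v, IsAlt u → IsAlt v → wedge2 u (act κ v) = wedge2 (act κ u) v

/-- Trace of a medium tensor: `½ κ^{ij}_{ij}`. -/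
def mtrace (κ : Fin 4 → Fin 4 → Fin 4 → Fin 4 → ℝ) : ℝ := (1 / 2) * ∑ i, ∑ j, κ i j i j

/-- The (unsymmetrised) Tamm-Rubilar tensor density `𝒢₀^{ijkl}`. -/
def TR0 (κ : Fin 4 → Fin 4 → Fin 4 → Fin 4 → ℝ) (i j k l : Fin 4) : ℝ :=
  (1 / 48) * ∑ a₁, ∑ a₂, ∑ a₃, ∑ a₄, ∑ b₁, ∑ b₂, ∑ b₃, ∑ b₄, ∑ b₅, ∑ b₆,
    κ a₁ a₂ b₁ b₂ * κ a₃ i b₃ b₄ * κ a₄ j b₅ b₆ *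
      eps4 b₁ b₂ b₅ k * eps4 b₃ b₄ b₆ l * eps4 a₁ a₂ a₃ a₄

/-- The Tamm-Rubilar quartic form `𝒢_κ(ξ) = 𝒢₀^{ijkl} ξ_i ξ_j ξ_k ξ_l`. -/
def TR (κ : Fin 4 → Fin 4 → Fin 4 → Fin 4 → ℝ) (ξ : Fin 4 → ℝ) : ℝ :=
  ∑ i, ∑ j, ∑ k, ∑ l, TR0 κ i j k l * ξ i * ξ j * ξ k * ξ l

/-- The Hodge star medium tensor of an invertible symmetric 4×4 matrix:
`(*_g)^{ij}_{rs} = √|det g| g^{ia} g^{jb} ε_{abrs}`. -/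
def hodge (g : Matrix (Fin 4) (Fin 4) ℝ) (i j r s : Fin 4) : ℝ :=
  Real.sqrt |g.det| * ∑ a, ∑ b, g⁻¹ i a * g⁻¹ j b * eps4 a b r s

/-- Lorentzian signature `(+---)` or `(-+++)` for a symmetric real 4×4 matrix. -/
def IsLorentzian (g : Matrix (Fin 4) (Fin 4) ℝ) : Prop :=
  ∃ P : Matrix (Fin 4) (Fin 4) ℝ, IsUnit P.det ∧
    (Pᵀ * g * P = Matrix.diagonal ![1, -1, -1, -1] ∨
      Pᵀ * g * P = Matrix.diagonal ![-1, 1, 1, 1])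

/-- The Levi-Civita symbol `ε_{1+r,1+a,1+b}` on the spatial indices `{1,2,3}`,
reindexed by `Fin 3`. -/
def eps3 (i j k : Fin 3) : ℝ :=
  (((j.val : ℝ) - (i.val : ℝ)) * ((k.val : ℝ) - (i.val : ℝ)) *
      ((k.val : ℝ) - (j.val : ℝ))) / 2

/-- The 3×3 matrix `𝒜`: `𝒜^{ri} = -½ ε^{iab} κ^{r0}_{ab}` (spatial indices). -/
def matA (κ : Fin 4 → Fin 4 → Fin 4 → Fin 4 → ℝ) : Matrix (Fin 3) (Fin 3) ℝ :=
  Matrix.of fun r i => -(1 / 2) * ∑ a, ∑ b, eps3 i a b * κ r.succ 0 a.succ b.succ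

/-- The 3×3 matrix `ℬ`: `ℬ_{ri} = -½ ε_{rab} κ^{ab}_{i0}` (spatial indices). -/
def matB (κ : Fin 4 → Fin 4 → Fin 4 → Fin 4 → ℝ) : Matrix (Fin 3) (Fin 3) ℝ :=
  Matrix.of fun r i => -(1 / 2) * ∑ a, ∑ b, eps3 r a b * κ a.succ b.succ i.succ 0

/-- The 3×3 matrix `𝒞`: `𝒞^r_i = κ^{r0}_{i0}` (spatial indices). -/
def matC (κ : Fin 4 → Fin 4 → Fin 4 → Fin 4 → ℝ) : Matrix (Fin 3) (Fin 3) ℝ :=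
  Matrix.of fun r i => κ r.succ 0 i.succ 0

/-- The 3×3 matrix `𝒟`: `𝒟_r^i = ¼ ε_{rmn} ε^{iab} κ^{mn}_{ab}` (spatial indices). -/
def matD (κ : Fin 4 → Fin 4 → Fin 4 → Fin 4 → ℝ) : Matrix (Fin 3) (Fin 3) ℝ :=
  Matrix.of fun r i =>
    (1 / 4) * ∑ m, ∑ n, ∑ a, ∑ b, eps3 r m n * eps3 i a b * κ m.succ n.succ a.succ b.succ
def Eb (p q : Fin 4) : Fin 4 → Fin 4 → ℝ := fun i j =>
  (if i = p ∧ j = q then 1 else 0) - (if i = q ∧ j = p then 1 else 0)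

lemma Eb_alt (p q : Fin 4) : IsAlt (Eb p q) := by
  intro i j
  simp only [Eb, and_comm]
  ring

lemma act_Eb (κ : Fin 4 → Fin 4 → Fin 4 → Fin 4 → ℝ) (hm : IsMedium κ) (p q i j : Fin 4) :
    act κ (Eb p q) i j = κ p q i j := by
  simp only [act, Eb, mul_sub, mul_ite, mul_one, mul_zero, ite_and]
  simp only [Finset.sum_sub_distrib, Finset.sum_ite_eq, Finset.sum_ite_eq', Finset.sum_ite_irrel, Finset.sum_const_zero, Finset.mem_univ, if_true]
  rw [hm.1 q p i j]
  ring

@[simp] lemma finv0 : ((0:Fin 4)).val = 0 := rfl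
@[simp] lemma finv1 : ((1:Fin 4)).val = 1 := rfl
@[simp] lemma finv2 : ((2:Fin 4)).val = 2 := rfl
@[simp] lemma finv3 : ((3:Fin 4)).val = 3 := rfl
@[simp] lemma f3v0 : ((0:Fin 3)).val = 0 := rfl
@[simp] lemma f3v1 : ((1:Fin 3)).val = 1 := rfl
@[simp] lemma f3v2 : ((2:Fin 3)).val = 2 := rfl

lemma eps4_swap01 (i j k l : Fin 4) : eps4 j i k l = -eps4 i j k l := by
  unfold eps4; ring

lemma eps4_pairswap (i j k l : Fin 4) : eps4 k l i j = eps4 i j k l := by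
  unfold eps4; ring

lemma sum_Eb (p q : Fin 4) (f : Fin 4 → Fin 4 → ℝ) :
    ∑ i, ∑ j, Eb p q i j * f i j = f p q - f q p := by
  simp only [Eb, sub_mul, one_mul, zero_mul, ite_mul, ite_and, Finset.sum_sub_distrib,
    Finset.sum_ite_eq, Finset.sum_ite_eq', Finset.sum_ite_irrel, Finset.sum_const_zero,
    Finset.mem_univ, if_true]

lemma wedge2_eq (u v : Fin 4 → Fin 4 → ℝ) :
    wedge2 u v = (1/4) * ∑ i, ∑ j, u i j * (∑ k, ∑ l, eps4 i j k l * v k l) := by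
  unfold wedge2
  congr 1
  refine Finset.sum_congr rfl fun i _ => Finset.sum_congr rfl fun j _ => ?_
  rw [Finset.mul_sum]
  refine Finset.sum_congr rfl fun k _ => ?_
  rw [Finset.mul_sum]
  refine Finset.sum_congr rfl fun l _ => ?_
  ring

lemma eps4_swap23 (i j k l : Fin 4) : eps4 i j l k = -eps4 i j k l := by
  unfold eps4; ring

lemma wedge_Eb_left (p q : Fin 4) (v : Fin 4 → Fin 4 → ℝ) :
    wedge2 (Eb p q) v = (1/2) * ∑ c, ∑ d, eps4 p q c d * v c d := by
  rw [wedge2_eq, sum_Eb]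
  have h : (∑ k, ∑ l, eps4 q p k l * v k l) = -∑ k, ∑ l, eps4 p q k l * v k l := by
    rw [← Finset.sum_neg_distrib]
    refine Finset.sum_congr rfl fun c _ => ?_
    rw [← Finset.sum_neg_distrib]
    refine Finset.sum_congr rfl fun d _ => ?_
    rw [eps4_swap01]; ring
  rw [h]; ring

lemma wedge_Eb_right (p q : Fin 4) (u : Fin 4 → Fin 4 → ℝ) :
    wedge2 u (Eb p q) = (1/2) * ∑ c, ∑ d, eps4 p q c d * u c d := by
  rw [wedge2_eq]
  have h1 : ∀ i j : Fin 4, (∑ k, ∑ l, eps4 i j k l * Eb p q k l) = 2 * eps4 p q i j := by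
    intro i j
    have h2 : (∑ k, ∑ l, eps4 i j k l * Eb p q k l)
        = ∑ k, ∑ l, Eb p q k l * (fun a b => eps4 i j a b) k l :=
      Finset.sum_congr rfl fun _ _ => Finset.sum_congr rfl fun _ _ => mul_comm _ _
    rw [h2, sum_Eb]
    rw [show eps4 i j q p = -eps4 i j p q from eps4_swap23 i j p q]
    rw [show eps4 i j p q = eps4 p q i j from (eps4_pairswap i j p q).symm]
    ring
  simp only [h1]
  rw [Finset.mul_sum, Finset.mul_sum]
  refine Finset.sum_congr rfl fun c _ => ?_
  rw [Finset.mul_sum, Finset.mul_sum]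
  refine Finset.sum_congr rfl fun d _ => ?_
  ring



section derive
variable {κ : Fin 4 → Fin 4 → Fin 4 → Fin 4 → ℝ}

lemma act_Eb_fun (hm : IsMedium κ) (p q : Fin 4) :
    act κ (Eb p q) = fun i j => κ p q i j :=
  funext fun i => funext fun j => act_Eb κ hm p q i j

lemma hK_gen (hm : IsMedium κ)
    (h2 : ∀ F, IsAlt F → ∀ i j, act κ (act κ F) i j = - F i j) (p q i j : Fin 4) :
    (1/2) * ∑ r, ∑ s, κ r s i j * κ p q r s = - Eb p q i j := by
  have := h2 (Eb p q) (Eb_alt p q) i j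
  rw [act_Eb_fun hm p q] at this
  rw [act] at this
  exact this

lemma hS_gen (hm : IsMedium κ) (hs : SkewonFree κ) (p q i j : Fin 4) :
    ∑ c, ∑ d, eps4 p q c d * κ i j c d = ∑ c, ∑ d, eps4 i j c d * κ p q c d := by
  have := hs (Eb p q) (Eb i j) (Eb_alt p q) (Eb_alt i j)
  rw [act_Eb_fun hm i j, act_Eb_fun hm p q, wedge_Eb_left, wedge_Eb_right] at this
  have h2 : (∑ c, ∑ d, eps4 p q c d * (fun a b => κ i j a b) c d)
      = ∑ c, ∑ d, eps4 p q c d * κ i j c d := rfl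
  linarith [this]

-- normalization lemmas
lemma kU_diag (hm : IsMedium κ) (i k l : Fin 4) : κ i i k l = 0 := by
  have := hm.1 i i k l; linarith
lemma kL_diag (hm : IsMedium κ) (i j k : Fin 4) : κ i j k k = 0 := by
  have := hm.2 i j k k; linarith

end derive

@[simp] lemma fmk40 (h : 0 < 4) : (⟨0, h⟩ : Fin 4) = 0 := rfl
@[simp] lemma fmk41 (h : 1 < 4) : (⟨1, h⟩ : Fin 4) = 1 := rfl
@[simp] lemma fmk42 (h : 2 < 4) : (⟨2, h⟩ : Fin 4) = 2 := rfl
@[simp] lemma fmk43 (h : 3 < 4) : (⟨3, h⟩ : Fin 4) = 3 := rfl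
@[simp] lemma fmk30 (h : 0 < 3) : (⟨0, h⟩ : Fin 3) = 0 := rfl
@[simp] lemma fmk31 (h : 1 < 3) : (⟨1, h⟩ : Fin 3) = 1 := rfl
@[simp] lemma fmk32 (h : 2 < 3) : (⟨2, h⟩ : Fin 3) = 2 := rfl

set_option maxHeartbeats 2000000 in
lemma L_hA (κ : Fin 4 → Fin 4 → Fin 4 → Fin 4 → ℝ) (hm : IsMedium κ)
    (hs : SkewonFree κ) : (matA κ)ᵀ = matA κ := by
  have u10 : ∀ k l, κ 1 0 k l = -κ 0 1 k l := fun k l => hm.1 1 0 k l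
  have u20 : ∀ k l, κ 2 0 k l = -κ 0 2 k l := fun k l => hm.1 2 0 k l
  have u21 : ∀ k l, κ 2 1 k l = -κ 1 2 k l := fun k l => hm.1 2 1 k l
  have u30 : ∀ k l, κ 3 0 k l = -κ 0 3 k l := fun k l => hm.1 3 0 k l
  have u31 : ∀ k l, κ 3 1 k l = -κ 1 3 k l := fun k l => hm.1 3 1 k l
  have u32 : ∀ k l, κ 3 2 k l = -κ 2 3 k l := fun k l => hm.1 3 2 k l
  have l10 : ∀ i j, κ i j 1 0 = -κ i j 0 1 := fun i j => hm.2 i j 1 0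
  have l20 : ∀ i j, κ i j 2 0 = -κ i j 0 2 := fun i j => hm.2 i j 2 0
  have l21 : ∀ i j, κ i j 2 1 = -κ i j 1 2 := fun i j => hm.2 i j 2 1
  have l30 : ∀ i j, κ i j 3 0 = -κ i j 0 3 := fun i j => hm.2 i j 3 0
  have l31 : ∀ i j, κ i j 3 1 = -κ i j 1 3 := fun i j => hm.2 i j 3 1
  have l32 : ∀ i j, κ i j 3 2 = -κ i j 2 3 := fun i j => hm.2 i j 3 2
  have e_1_0_1_0 := hS_gen hm hs 1 0 1 0
  simp only [Fin.sum_univ_four] at e_1_0_1_0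
  norm_num [eps4, kU_diag hm, kL_diag hm, u10, u20, u21, u30, u31, u32, l10, l20, l21, l30, l31, l32, Fin.ext_iff] at e_1_0_1_0
  have e_1_0_2_0 := hS_gen hm hs 1 0 2 0
  simp only [Fin.sum_univ_four] at e_1_0_2_0
  norm_num [eps4, kU_diag hm, kL_diag hm, u10, u20, u21, u30, u31, u32, l10, l20, l21, l30, l31, l32, Fin.ext_iff] at e_1_0_2_0
  have e_1_0_3_0 := hS_gen hm hs 1 0 3 0
  simp only [Fin.sum_univ_four] at e_1_0_3_0
  norm_num [eps4, kU_diag hm, kL_diag hm, u10, u20, u21, u30, u31, u32, l10, l20, l21, l30, l31, l32, Fin.ext_iff] at e_1_0_3_0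
  have e_2_0_1_0 := hS_gen hm hs 2 0 1 0
  simp only [Fin.sum_univ_four] at e_2_0_1_0
  norm_num [eps4, kU_diag hm, kL_diag hm, u10, u20, u21, u30, u31, u32, l10, l20, l21, l30, l31, l32, Fin.ext_iff] at e_2_0_1_0
  have e_2_0_2_0 := hS_gen hm hs 2 0 2 0
  simp only [Fin.sum_univ_four] at e_2_0_2_0
  norm_num [eps4, kU_diag hm, kL_diag hm, u10, u20, u21, u30, u31, u32, l10, l20, l21, l30, l31, l32, Fin.ext_iff] at e_2_0_2_0
  have e_2_0_3_0 := hS_gen hm hs 2 0 3 0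
  simp only [Fin.sum_univ_four] at e_2_0_3_0
  norm_num [eps4, kU_diag hm, kL_diag hm, u10, u20, u21, u30, u31, u32, l10, l20, l21, l30, l31, l32, Fin.ext_iff] at e_2_0_3_0
  have e_3_0_1_0 := hS_gen hm hs 3 0 1 0
  simp only [Fin.sum_univ_four] at e_3_0_1_0
  norm_num [eps4, kU_diag hm, kL_diag hm, u10, u20, u21, u30, u31, u32, l10, l20, l21, l30, l31, l32, Fin.ext_iff] at e_3_0_1_0
  have e_3_0_2_0 := hS_gen hm hs 3 0 2 0
  simp only [Fin.sum_univ_four] at e_3_0_2_0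
  norm_num [eps4, kU_diag hm, kL_diag hm, u10, u20, u21, u30, u31, u32, l10, l20, l21, l30, l31, l32, Fin.ext_iff] at e_3_0_2_0
  have e_3_0_3_0 := hS_gen hm hs 3 0 3 0
  simp only [Fin.sum_univ_four] at e_3_0_3_0
  norm_num [eps4, kU_diag hm, kL_diag hm, u10, u20, u21, u30, u31, u32, l10, l20, l21, l30, l31, l32, Fin.ext_iff] at e_3_0_3_0
  ext r i
  fin_cases r <;> fin_cases i
  all_goals simp only [Matrix.transpose_apply, Matrix.add_apply, Matrix.mul_apply, Matrix.neg_apply, Matrix.one_apply, Matrix.zero_apply, matA, matB, matC, matD, Matrix.of_apply, Fin.sum_univ_three]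
  all_goals norm_num [eps3, show (0:Fin 3).succ = 1 from rfl, show (1:Fin 3).succ = 2 from rfl, show (2:Fin 3).succ = 3 from rfl, kU_diag hm, kL_diag hm, u10, u20, u21, u30, u31, u32, l10, l20, l21, l30, l31, l32, Fin.ext_iff]
  all_goals linarith [e_1_0_1_0, e_1_0_2_0, e_1_0_3_0, e_2_0_1_0, e_2_0_2_0, e_2_0_3_0, e_3_0_1_0, e_3_0_2_0, e_3_0_3_0]

set_option maxHeartbeats 2000000 in
lemma L_hB (κ : Fin 4 → Fin 4 → Fin 4 → Fin 4 → ℝ) (hm : IsMedium κ)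
    (hs : SkewonFree κ) : (matB κ)ᵀ = matB κ := by
  have u10 : ∀ k l, κ 1 0 k l = -κ 0 1 k l := fun k l => hm.1 1 0 k l
  have u20 : ∀ k l, κ 2 0 k l = -κ 0 2 k l := fun k l => hm.1 2 0 k l
  have u21 : ∀ k l, κ 2 1 k l = -κ 1 2 k l := fun k l => hm.1 2 1 k l
  have u30 : ∀ k l, κ 3 0 k l = -κ 0 3 k l := fun k l => hm.1 3 0 k l
  have u31 : ∀ k l, κ 3 1 k l = -κ 1 3 k l := fun k l => hm.1 3 1 k l
  have u32 : ∀ k l, κ 3 2 k l = -κ 2 3 k l := fun k l => hm.1 3 2 k l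
  have l10 : ∀ i j, κ i j 1 0 = -κ i j 0 1 := fun i j => hm.2 i j 1 0
  have l20 : ∀ i j, κ i j 2 0 = -κ i j 0 2 := fun i j => hm.2 i j 2 0
  have l21 : ∀ i j, κ i j 2 1 = -κ i j 1 2 := fun i j => hm.2 i j 2 1
  have l30 : ∀ i j, κ i j 3 0 = -κ i j 0 3 := fun i j => hm.2 i j 3 0
  have l31 : ∀ i j, κ i j 3 1 = -κ i j 1 3 := fun i j => hm.2 i j 3 1
  have l32 : ∀ i j, κ i j 3 2 = -κ i j 2 3 := fun i j => hm.2 i j 3 2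
  have e_1_2_1_2 := hS_gen hm hs 1 2 1 2
  simp only [Fin.sum_univ_four] at e_1_2_1_2
  norm_num [eps4, kU_diag hm, kL_diag hm, u10, u20, u21, u30, u31, u32, l10, l20, l21, l30, l31, l32, Fin.ext_iff] at e_1_2_1_2
  have e_1_2_1_3 := hS_gen hm hs 1 2 1 3
  simp only [Fin.sum_univ_four] at e_1_2_1_3
  norm_num [eps4, kU_diag hm, kL_diag hm, u10, u20, u21, u30, u31, u32, l10, l20, l21, l30, l31, l32, Fin.ext_iff] at e_1_2_1_3
  have e_1_2_2_3 := hS_gen hm hs 1 2 2 3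
  simp only [Fin.sum_univ_four] at e_1_2_2_3
  norm_num [eps4, kU_diag hm, kL_diag hm, u10, u20, u21, u30, u31, u32, l10, l20, l21, l30, l31, l32, Fin.ext_iff] at e_1_2_2_3
  have e_1_3_1_2 := hS_gen hm hs 1 3 1 2
  simp only [Fin.sum_univ_four] at e_1_3_1_2
  norm_num [eps4, kU_diag hm, kL_diag hm, u10, u20, u21, u30, u31, u32, l10, l20, l21, l30, l31, l32, Fin.ext_iff] at e_1_3_1_2
  have e_1_3_1_3 := hS_gen hm hs 1 3 1 3
  simp only [Fin.sum_univ_four] at e_1_3_1_3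
  norm_num [eps4, kU_diag hm, kL_diag hm, u10, u20, u21, u30, u31, u32, l10, l20, l21, l30, l31, l32, Fin.ext_iff] at e_1_3_1_3
  have e_1_3_2_3 := hS_gen hm hs 1 3 2 3
  simp only [Fin.sum_univ_four] at e_1_3_2_3
  norm_num [eps4, kU_diag hm, kL_diag hm, u10, u20, u21, u30, u31, u32, l10, l20, l21, l30, l31, l32, Fin.ext_iff] at e_1_3_2_3
  have e_2_3_1_2 := hS_gen hm hs 2 3 1 2
  simp only [Fin.sum_univ_four] at e_2_3_1_2
  norm_num [eps4, kU_diag hm, kL_diag hm, u10, u20, u21, u30, u31, u32, l10, l20, l21, l30, l31, l32, Fin.ext_iff] at e_2_3_1_2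
  have e_2_3_1_3 := hS_gen hm hs 2 3 1 3
  simp only [Fin.sum_univ_four] at e_2_3_1_3
  norm_num [eps4, kU_diag hm, kL_diag hm, u10, u20, u21, u30, u31, u32, l10, l20, l21, l30, l31, l32, Fin.ext_iff] at e_2_3_1_3
  have e_2_3_2_3 := hS_gen hm hs 2 3 2 3
  simp only [Fin.sum_univ_four] at e_2_3_2_3
  norm_num [eps4, kU_diag hm, kL_diag hm, u10, u20, u21, u30, u31, u32, l10, l20, l21, l30, l31, l32, Fin.ext_iff] at e_2_3_2_3
  ext r i
  fin_cases r <;> fin_cases i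
  all_goals simp only [Matrix.transpose_apply, Matrix.add_apply, Matrix.mul_apply, Matrix.neg_apply, Matrix.one_apply, Matrix.zero_apply, matA, matB, matC, matD, Matrix.of_apply, Fin.sum_univ_three]
  all_goals norm_num [eps3, show (0:Fin 3).succ = 1 from rfl, show (1:Fin 3).succ = 2 from rfl, show (2:Fin 3).succ = 3 from rfl, kU_diag hm, kL_diag hm, u10, u20, u21, u30, u31, u32, l10, l20, l21, l30, l31, l32, Fin.ext_iff]
  all_goals linarith [e_1_2_1_2, e_1_2_1_3, e_1_2_2_3, e_1_3_1_2, e_1_3_1_3, e_1_3_2_3, e_2_3_1_2, e_2_3_1_3, e_2_3_2_3]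

set_option maxHeartbeats 2000000 in
lemma L_hD (κ : Fin 4 → Fin 4 → Fin 4 → Fin 4 → ℝ) (hm : IsMedium κ)
    (hs : SkewonFree κ) : matD κ = (matC κ)ᵀ := by
  have u10 : ∀ k l, κ 1 0 k l = -κ 0 1 k l := fun k l => hm.1 1 0 k l
  have u20 : ∀ k l, κ 2 0 k l = -κ 0 2 k l := fun k l => hm.1 2 0 k l
  have u21 : ∀ k l, κ 2 1 k l = -κ 1 2 k l := fun k l => hm.1 2 1 k l
  have u30 : ∀ k l, κ 3 0 k l = -κ 0 3 k l := fun k l => hm.1 3 0 k l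
  have u31 : ∀ k l, κ 3 1 k l = -κ 1 3 k l := fun k l => hm.1 3 1 k l
  have u32 : ∀ k l, κ 3 2 k l = -κ 2 3 k l := fun k l => hm.1 3 2 k l
  have l10 : ∀ i j, κ i j 1 0 = -κ i j 0 1 := fun i j => hm.2 i j 1 0
  have l20 : ∀ i j, κ i j 2 0 = -κ i j 0 2 := fun i j => hm.2 i j 2 0
  have l21 : ∀ i j, κ i j 2 1 = -κ i j 1 2 := fun i j => hm.2 i j 2 1
  have l30 : ∀ i j, κ i j 3 0 = -κ i j 0 3 := fun i j => hm.2 i j 3 0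
  have l31 : ∀ i j, κ i j 3 1 = -κ i j 1 3 := fun i j => hm.2 i j 3 1
  have l32 : ∀ i j, κ i j 3 2 = -κ i j 2 3 := fun i j => hm.2 i j 3 2
  have e_1_2_1_0 := hS_gen hm hs 1 2 1 0
  simp only [Fin.sum_univ_four] at e_1_2_1_0
  norm_num [eps4, kU_diag hm, kL_diag hm, u10, u20, u21, u30, u31, u32, l10, l20, l21, l30, l31, l32, Fin.ext_iff] at e_1_2_1_0
  have e_1_2_2_0 := hS_gen hm hs 1 2 2 0
  simp only [Fin.sum_univ_four] at e_1_2_2_0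
  norm_num [eps4, kU_diag hm, kL_diag hm, u10, u20, u21, u30, u31, u32, l10, l20, l21, l30, l31, l32, Fin.ext_iff] at e_1_2_2_0
  have e_1_2_3_0 := hS_gen hm hs 1 2 3 0
  simp only [Fin.sum_univ_four] at e_1_2_3_0
  norm_num [eps4, kU_diag hm, kL_diag hm, u10, u20, u21, u30, u31, u32, l10, l20, l21, l30, l31, l32, Fin.ext_iff] at e_1_2_3_0
  have e_1_3_1_0 := hS_gen hm hs 1 3 1 0
  simp only [Fin.sum_univ_four] at e_1_3_1_0
  norm_num [eps4, kU_diag hm, kL_diag hm, u10, u20, u21, u30, u31, u32, l10, l20, l21, l30, l31, l32, Fin.ext_iff] at e_1_3_1_0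
  have e_1_3_2_0 := hS_gen hm hs 1 3 2 0
  simp only [Fin.sum_univ_four] at e_1_3_2_0
  norm_num [eps4, kU_diag hm, kL_diag hm, u10, u20, u21, u30, u31, u32, l10, l20, l21, l30, l31, l32, Fin.ext_iff] at e_1_3_2_0
  have e_1_3_3_0 := hS_gen hm hs 1 3 3 0
  simp only [Fin.sum_univ_four] at e_1_3_3_0
  norm_num [eps4, kU_diag hm, kL_diag hm, u10, u20, u21, u30, u31, u32, l10, l20, l21, l30, l31, l32, Fin.ext_iff] at e_1_3_3_0
  have e_2_3_1_0 := hS_gen hm hs 2 3 1 0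
  simp only [Fin.sum_univ_four] at e_2_3_1_0
  norm_num [eps4, kU_diag hm, kL_diag hm, u10, u20, u21, u30, u31, u32, l10, l20, l21, l30, l31, l32, Fin.ext_iff] at e_2_3_1_0
  have e_2_3_2_0 := hS_gen hm hs 2 3 2 0
  simp only [Fin.sum_univ_four] at e_2_3_2_0
  norm_num [eps4, kU_diag hm, kL_diag hm, u10, u20, u21, u30, u31, u32, l10, l20, l21, l30, l31, l32, Fin.ext_iff] at e_2_3_2_0
  have e_2_3_3_0 := hS_gen hm hs 2 3 3 0
  simp only [Fin.sum_univ_four] at e_2_3_3_0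
  norm_num [eps4, kU_diag hm, kL_diag hm, u10, u20, u21, u30, u31, u32, l10, l20, l21, l30, l31, l32, Fin.ext_iff] at e_2_3_3_0
  ext r i
  fin_cases r <;> fin_cases i
  all_goals simp only [Matrix.transpose_apply, Matrix.add_apply, Matrix.mul_apply, Matrix.neg_apply, Matrix.one_apply, Matrix.zero_apply, matA, matB, matC, matD, Matrix.of_apply, Fin.sum_univ_three]
  all_goals norm_num [eps3, show (0:Fin 3).succ = 1 from rfl, show (1:Fin 3).succ = 2 from rfl, show (2:Fin 3).succ = 3 from rfl, kU_diag hm, kL_diag hm, u10, u20, u21, u30, u31, u32, l10, l20, l21, l30, l31, l32, Fin.ext_iff]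
  all_goals linarith [e_1_2_1_0, e_1_2_2_0, e_1_2_3_0, e_1_3_1_0, e_1_3_2_0, e_1_3_3_0, e_2_3_1_0, e_2_3_2_0, e_2_3_3_0]

set_option maxHeartbeats 2000000 in
lemma L_h1 (κ : Fin 4 → Fin 4 → Fin 4 → Fin 4 → ℝ) (hm : IsMedium κ)
    (h2 : ∀ F, IsAlt F → ∀ i j, act κ (act κ F) i j = - F i j) : matC κ * matC κ + matA κ * matB κ = -1 := by
  have u10 : ∀ k l, κ 1 0 k l = -κ 0 1 k l := fun k l => hm.1 1 0 k l
  have u20 : ∀ k l, κ 2 0 k l = -κ 0 2 k l := fun k l => hm.1 2 0 k l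
  have u21 : ∀ k l, κ 2 1 k l = -κ 1 2 k l := fun k l => hm.1 2 1 k l
  have u30 : ∀ k l, κ 3 0 k l = -κ 0 3 k l := fun k l => hm.1 3 0 k l
  have u31 : ∀ k l, κ 3 1 k l = -κ 1 3 k l := fun k l => hm.1 3 1 k l
  have u32 : ∀ k l, κ 3 2 k l = -κ 2 3 k l := fun k l => hm.1 3 2 k l
  have l10 : ∀ i j, κ i j 1 0 = -κ i j 0 1 := fun i j => hm.2 i j 1 0
  have l20 : ∀ i j, κ i j 2 0 = -κ i j 0 2 := fun i j => hm.2 i j 2 0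
  have l21 : ∀ i j, κ i j 2 1 = -κ i j 1 2 := fun i j => hm.2 i j 2 1
  have l30 : ∀ i j, κ i j 3 0 = -κ i j 0 3 := fun i j => hm.2 i j 3 0
  have l31 : ∀ i j, κ i j 3 1 = -κ i j 1 3 := fun i j => hm.2 i j 3 1
  have l32 : ∀ i j, κ i j 3 2 = -κ i j 2 3 := fun i j => hm.2 i j 3 2
  have e_1_0_1_0 := hK_gen hm h2 1 0 1 0
  simp only [Fin.sum_univ_four] at e_1_0_1_0
  norm_num [Eb, kU_diag hm, kL_diag hm, u10, u20, u21, u30, u31, u32, l10, l20, l21, l30, l31, l32, Fin.ext_iff] at e_1_0_1_0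
  have e_1_0_2_0 := hK_gen hm h2 1 0 2 0
  simp only [Fin.sum_univ_four] at e_1_0_2_0
  norm_num [Eb, kU_diag hm, kL_diag hm, u10, u20, u21, u30, u31, u32, l10, l20, l21, l30, l31, l32, Fin.ext_iff] at e_1_0_2_0
  have e_1_0_3_0 := hK_gen hm h2 1 0 3 0
  simp only [Fin.sum_univ_four] at e_1_0_3_0
  norm_num [Eb, kU_diag hm, kL_diag hm, u10, u20, u21, u30, u31, u32, l10, l20, l21, l30, l31, l32, Fin.ext_iff] at e_1_0_3_0
  have e_2_0_1_0 := hK_gen hm h2 2 0 1 0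
  simp only [Fin.sum_univ_four] at e_2_0_1_0
  norm_num [Eb, kU_diag hm, kL_diag hm, u10, u20, u21, u30, u31, u32, l10, l20, l21, l30, l31, l32, Fin.ext_iff] at e_2_0_1_0
  have e_2_0_2_0 := hK_gen hm h2 2 0 2 0
  simp only [Fin.sum_univ_four] at e_2_0_2_0
  norm_num [Eb, kU_diag hm, kL_diag hm, u10, u20, u21, u30, u31, u32, l10, l20, l21, l30, l31, l32, Fin.ext_iff] at e_2_0_2_0
  have e_2_0_3_0 := hK_gen hm h2 2 0 3 0
  simp only [Fin.sum_univ_four] at e_2_0_3_0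
  norm_num [Eb, kU_diag hm, kL_diag hm, u10, u20, u21, u30, u31, u32, l10, l20, l21, l30, l31, l32, Fin.ext_iff] at e_2_0_3_0
  have e_3_0_1_0 := hK_gen hm h2 3 0 1 0
  simp only [Fin.sum_univ_four] at e_3_0_1_0
  norm_num [Eb, kU_diag hm, kL_diag hm, u10, u20, u21, u30, u31, u32, l10, l20, l21, l30, l31, l32, Fin.ext_iff] at e_3_0_1_0
  have e_3_0_2_0 := hK_gen hm h2 3 0 2 0
  simp only [Fin.sum_univ_four] at e_3_0_2_0
  norm_num [Eb, kU_diag hm, kL_diag hm, u10, u20, u21, u30, u31, u32, l10, l20, l21, l30, l31, l32, Fin.ext_iff] at e_3_0_2_0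
  have e_3_0_3_0 := hK_gen hm h2 3 0 3 0
  simp only [Fin.sum_univ_four] at e_3_0_3_0
  norm_num [Eb, kU_diag hm, kL_diag hm, u10, u20, u21, u30, u31, u32, l10, l20, l21, l30, l31, l32, Fin.ext_iff] at e_3_0_3_0
  ext r i
  fin_cases r <;> fin_cases i
  all_goals simp only [Matrix.transpose_apply, Matrix.add_apply, Matrix.mul_apply, Matrix.neg_apply, Matrix.one_apply, Matrix.zero_apply, matA, matB, matC, matD, Matrix.of_apply, Fin.sum_univ_three]
  all_goals norm_num [eps3, show (0:Fin 3).succ = 1 from rfl, show (1:Fin 3).succ = 2 from rfl, show (2:Fin 3).succ = 3 from rfl, kU_diag hm, kL_diag hm, u10, u20, u21, u30, u31, u32, l10, l20, l21, l30, l31, l32, Fin.ext_iff]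
  all_goals linarith [e_1_0_1_0, e_1_0_2_0, e_1_0_3_0, e_2_0_1_0, e_2_0_2_0, e_2_0_3_0, e_3_0_1_0, e_3_0_2_0, e_3_0_3_0]

set_option maxHeartbeats 2000000 in
lemma L_h3 (κ : Fin 4 → Fin 4 → Fin 4 → Fin 4 → ℝ) (hm : IsMedium κ)
    (h2 : ∀ F, IsAlt F → ∀ i j, act κ (act κ F) i j = - F i j) : matC κ * matA κ + matA κ * matD κ = 0 := by
  have u10 : ∀ k l, κ 1 0 k l = -κ 0 1 k l := fun k l => hm.1 1 0 k l
  have u20 : ∀ k l, κ 2 0 k l = -κ 0 2 k l := fun k l => hm.1 2 0 k l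
  have u21 : ∀ k l, κ 2 1 k l = -κ 1 2 k l := fun k l => hm.1 2 1 k l
  have u30 : ∀ k l, κ 3 0 k l = -κ 0 3 k l := fun k l => hm.1 3 0 k l
  have u31 : ∀ k l, κ 3 1 k l = -κ 1 3 k l := fun k l => hm.1 3 1 k l
  have u32 : ∀ k l, κ 3 2 k l = -κ 2 3 k l := fun k l => hm.1 3 2 k l
  have l10 : ∀ i j, κ i j 1 0 = -κ i j 0 1 := fun i j => hm.2 i j 1 0
  have l20 : ∀ i j, κ i j 2 0 = -κ i j 0 2 := fun i j => hm.2 i j 2 0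
  have l21 : ∀ i j, κ i j 2 1 = -κ i j 1 2 := fun i j => hm.2 i j 2 1
  have l30 : ∀ i j, κ i j 3 0 = -κ i j 0 3 := fun i j => hm.2 i j 3 0
  have l31 : ∀ i j, κ i j 3 1 = -κ i j 1 3 := fun i j => hm.2 i j 3 1
  have l32 : ∀ i j, κ i j 3 2 = -κ i j 2 3 := fun i j => hm.2 i j 3 2
  have e_1_0_1_2 := hK_gen hm h2 1 0 1 2
  simp only [Fin.sum_univ_four] at e_1_0_1_2
  norm_num [Eb, kU_diag hm, kL_diag hm, u10, u20, u21, u30, u31, u32, l10, l20, l21, l30, l31, l32, Fin.ext_iff] at e_1_0_1_2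
  have e_1_0_1_3 := hK_gen hm h2 1 0 1 3
  simp only [Fin.sum_univ_four] at e_1_0_1_3
  norm_num [Eb, kU_diag hm, kL_diag hm, u10, u20, u21, u30, u31, u32, l10, l20, l21, l30, l31, l32, Fin.ext_iff] at e_1_0_1_3
  have e_1_0_2_3 := hK_gen hm h2 1 0 2 3
  simp only [Fin.sum_univ_four] at e_1_0_2_3
  norm_num [Eb, kU_diag hm, kL_diag hm, u10, u20, u21, u30, u31, u32, l10, l20, l21, l30, l31, l32, Fin.ext_iff] at e_1_0_2_3
  have e_2_0_1_2 := hK_gen hm h2 2 0 1 2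
  simp only [Fin.sum_univ_four] at e_2_0_1_2
  norm_num [Eb, kU_diag hm, kL_diag hm, u10, u20, u21, u30, u31, u32, l10, l20, l21, l30, l31, l32, Fin.ext_iff] at e_2_0_1_2
  have e_2_0_1_3 := hK_gen hm h2 2 0 1 3
  simp only [Fin.sum_univ_four] at e_2_0_1_3
  norm_num [Eb, kU_diag hm, kL_diag hm, u10, u20, u21, u30, u31, u32, l10, l20, l21, l30, l31, l32, Fin.ext_iff] at e_2_0_1_3
  have e_2_0_2_3 := hK_gen hm h2 2 0 2 3
  simp only [Fin.sum_univ_four] at e_2_0_2_3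
  norm_num [Eb, kU_diag hm, kL_diag hm, u10, u20, u21, u30, u31, u32, l10, l20, l21, l30, l31, l32, Fin.ext_iff] at e_2_0_2_3
  have e_3_0_1_2 := hK_gen hm h2 3 0 1 2
  simp only [Fin.sum_univ_four] at e_3_0_1_2
  norm_num [Eb, kU_diag hm, kL_diag hm, u10, u20, u21, u30, u31, u32, l10, l20, l21, l30, l31, l32, Fin.ext_iff] at e_3_0_1_2
  have e_3_0_1_3 := hK_gen hm h2 3 0 1 3
  simp only [Fin.sum_univ_four] at e_3_0_1_3
  norm_num [Eb, kU_diag hm, kL_diag hm, u10, u20, u21, u30, u31, u32, l10, l20, l21, l30, l31, l32, Fin.ext_iff] at e_3_0_1_3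
  have e_3_0_2_3 := hK_gen hm h2 3 0 2 3
  simp only [Fin.sum_univ_four] at e_3_0_2_3
  norm_num [Eb, kU_diag hm, kL_diag hm, u10, u20, u21, u30, u31, u32, l10, l20, l21, l30, l31, l32, Fin.ext_iff] at e_3_0_2_3
  ext r i
  fin_cases r <;> fin_cases i
  all_goals simp only [Matrix.transpose_apply, Matrix.add_apply, Matrix.mul_apply, Matrix.neg_apply, Matrix.one_apply, Matrix.zero_apply, matA, matB, matC, matD, Matrix.of_apply, Fin.sum_univ_three]
  all_goals norm_num [eps3, show (0:Fin 3).succ = 1 from rfl, show (1:Fin 3).succ = 2 from rfl, show (2:Fin 3).succ = 3 from rfl, kU_diag hm, kL_diag hm, u10, u20, u21, u30, u31, u32, l10, l20, l21, l30, l31, l32, Fin.ext_iff]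
  all_goals linarith [e_1_0_1_2, e_1_0_1_3, e_1_0_2_3, e_2_0_1_2, e_2_0_1_3, e_2_0_2_3, e_3_0_1_2, e_3_0_1_3, e_3_0_2_3]

set_option maxHeartbeats 2000000 in
lemma L_h2 (κ : Fin 4 → Fin 4 → Fin 4 → Fin 4 → ℝ) (hm : IsMedium κ)
    (h2 : ∀ F, IsAlt F → ∀ i j, act κ (act κ F) i j = - F i j) : matB κ * matC κ + matD κ * matB κ = 0 := by
  have u10 : ∀ k l, κ 1 0 k l = -κ 0 1 k l := fun k l => hm.1 1 0 k l
  have u20 : ∀ k l, κ 2 0 k l = -κ 0 2 k l := fun k l => hm.1 2 0 k l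
  have u21 : ∀ k l, κ 2 1 k l = -κ 1 2 k l := fun k l => hm.1 2 1 k l
  have u30 : ∀ k l, κ 3 0 k l = -κ 0 3 k l := fun k l => hm.1 3 0 k l
  have u31 : ∀ k l, κ 3 1 k l = -κ 1 3 k l := fun k l => hm.1 3 1 k l
  have u32 : ∀ k l, κ 3 2 k l = -κ 2 3 k l := fun k l => hm.1 3 2 k l
  have l10 : ∀ i j, κ i j 1 0 = -κ i j 0 1 := fun i j => hm.2 i j 1 0
  have l20 : ∀ i j, κ i j 2 0 = -κ i j 0 2 := fun i j => hm.2 i j 2 0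
  have l21 : ∀ i j, κ i j 2 1 = -κ i j 1 2 := fun i j => hm.2 i j 2 1
  have l30 : ∀ i j, κ i j 3 0 = -κ i j 0 3 := fun i j => hm.2 i j 3 0
  have l31 : ∀ i j, κ i j 3 1 = -κ i j 1 3 := fun i j => hm.2 i j 3 1
  have l32 : ∀ i j, κ i j 3 2 = -κ i j 2 3 := fun i j => hm.2 i j 3 2
  have e_1_2_1_0 := hK_gen hm h2 1 2 1 0
  simp only [Fin.sum_univ_four] at e_1_2_1_0
  norm_num [Eb, kU_diag hm, kL_diag hm, u10, u20, u21, u30, u31, u32, l10, l20, l21, l30, l31, l32, Fin.ext_iff] at e_1_2_1_0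
  have e_1_2_2_0 := hK_gen hm h2 1 2 2 0
  simp only [Fin.sum_univ_four] at e_1_2_2_0
  norm_num [Eb, kU_diag hm, kL_diag hm, u10, u20, u21, u30, u31, u32, l10, l20, l21, l30, l31, l32, Fin.ext_iff] at e_1_2_2_0
  have e_1_2_3_0 := hK_gen hm h2 1 2 3 0
  simp only [Fin.sum_univ_four] at e_1_2_3_0
  norm_num [Eb, kU_diag hm, kL_diag hm, u10, u20, u21, u30, u31, u32, l10, l20, l21, l30, l31, l32, Fin.ext_iff] at e_1_2_3_0
  have e_1_3_1_0 := hK_gen hm h2 1 3 1 0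
  simp only [Fin.sum_univ_four] at e_1_3_1_0
  norm_num [Eb, kU_diag hm, kL_diag hm, u10, u20, u21, u30, u31, u32, l10, l20, l21, l30, l31, l32, Fin.ext_iff] at e_1_3_1_0
  have e_1_3_2_0 := hK_gen hm h2 1 3 2 0
  simp only [Fin.sum_univ_four] at e_1_3_2_0
  norm_num [Eb, kU_diag hm, kL_diag hm, u10, u20, u21, u30, u31, u32, l10, l20, l21, l30, l31, l32, Fin.ext_iff] at e_1_3_2_0
  have e_1_3_3_0 := hK_gen hm h2 1 3 3 0
  simp only [Fin.sum_univ_four] at e_1_3_3_0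
  norm_num [Eb, kU_diag hm, kL_diag hm, u10, u20, u21, u30, u31, u32, l10, l20, l21, l30, l31, l32, Fin.ext_iff] at e_1_3_3_0
  have e_2_3_1_0 := hK_gen hm h2 2 3 1 0
  simp only [Fin.sum_univ_four] at e_2_3_1_0
  norm_num [Eb, kU_diag hm, kL_diag hm, u10, u20, u21, u30, u31, u32, l10, l20, l21, l30, l31, l32, Fin.ext_iff] at e_2_3_1_0
  have e_2_3_2_0 := hK_gen hm h2 2 3 2 0
  simp only [Fin.sum_univ_four] at e_2_3_2_0
  norm_num [Eb, kU_diag hm, kL_diag hm, u10, u20, u21, u30, u31, u32, l10, l20, l21, l30, l31, l32, Fin.ext_iff] at e_2_3_2_0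
  have e_2_3_3_0 := hK_gen hm h2 2 3 3 0
  simp only [Fin.sum_univ_four] at e_2_3_3_0
  norm_num [Eb, kU_diag hm, kL_diag hm, u10, u20, u21, u30, u31, u32, l10, l20, l21, l30, l31, l32, Fin.ext_iff] at e_2_3_3_0
  ext r i
  fin_cases r <;> fin_cases i
  all_goals simp only [Matrix.transpose_apply, Matrix.add_apply, Matrix.mul_apply, Matrix.neg_apply, Matrix.one_apply, Matrix.zero_apply, matA, matB, matC, matD, Matrix.of_apply, Fin.sum_univ_three]
  all_goals norm_num [eps3, show (0:Fin 3).succ = 1 from rfl, show (1:Fin 3).succ = 2 from rfl, show (2:Fin 3).succ = 3 from rfl, kU_diag hm, kL_diag hm, u10, u20, u21, u30, u31, u32, l10, l20, l21, l30, l31, l32, Fin.ext_iff]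
  all_goals linarith [e_1_2_1_0, e_1_2_2_0, e_1_2_3_0, e_1_3_1_0, e_1_3_2_0, e_1_3_3_0, e_2_3_1_0, e_2_3_2_0, e_2_3_3_0]

theorem part1 (κ : Fin 4 → Fin 4 → Fin 4 → Fin 4 → ℝ) (hm : IsMedium κ) (hs : SkewonFree κ)
    (h2 : ∀ F, IsAlt F → ∀ i j, act κ (act κ F) i j = - F i j) :
    (matA κ).IsSymm ∧ (matB κ).IsSymm ∧ (matC κ * matC κ + matA κ * matB κ = -1) ∧
    (matB κ * matC κ + (matC κ)ᵀ * matB κ = 0) ∧ (matC κ * matA κ + matA κ * (matC κ)ᵀ = 0) := by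
  have hD := L_hD κ hm hs
  have h3 := L_h3 κ hm h2
  have h2p := L_h2 κ hm h2
  rw [hD] at h3 h2p
  exact ⟨L_hA κ hm hs, L_hB κ hm hs, L_h1 κ hm h2, h2p, h3⟩

theorem part2 (A B C : Matrix (Fin 3) (Fin 3) ℝ) (hA : A.IsSymm) (hB : B.IsSymm)
    (h1 : C*C + A*B = -1) (h2 : B*C + Cᵀ*B = 0) (h3 : C*A + A*Cᵀ = 0) :
    A ≠ 0 ∧ A.rank ≠ 2 := by
  constructor
  · rintro rfl
    simp only [Matrix.zero_mul, add_zero] at h1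
    have hdet := congrArg Matrix.det h1
    rw [Matrix.det_mul] at hdet
    have hm : ((-1 : Matrix (Fin 3) (Fin 3) ℝ)).det = -1 := by
      rw [show (-1 : Matrix (Fin 3) (Fin 3) ℝ) = (-1 : ℝ) • 1 by simp, Matrix.det_smul]
      norm_num
    rw [hm] at hdet
    nlinarith [sq_nonneg C.det]
  · intro hrank
    have hrn := LinearMap.finrank_range_add_finrank_ker (A.mulVecLin)
    rw [show Module.finrank ℝ (LinearMap.range A.mulVecLin) = A.rank from rfl, hrank] at hrn
    simp [Module.finrank_pi] at hrn
    have hker1 : Module.finrank ℝ (LinearMap.ker A.mulVecLin) = 1 := by omega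
    obtain ⟨v, hv, hv0⟩ : ∃ v ∈ LinearMap.ker A.mulVecLin, v ≠ 0 := by
      apply Submodule.exists_mem_ne_zero_of_ne_bot
      intro hbot
      rw [hbot] at hker1; simp at hker1
    have hAv : A.mulVec v = 0 := hv
    have hACt : A * Cᵀ = -(C*A) := by
      rw [eq_neg_iff_add_eq_zero, add_comm]; exact h3
    have hCv : Cᵀ.mulVec v ∈ LinearMap.ker A.mulVecLin := by
      simp only [LinearMap.mem_ker, Matrix.mulVecLin_apply]
      have : A *ᵥ (Cᵀ *ᵥ v) = (A * Cᵀ) *ᵥ v := by rw [Matrix.mulVec_mulVec]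
      rw [this, hACt, Matrix.neg_mulVec, ← Matrix.mulVec_mulVec, hAv]
      simp
    have hspan : Submodule.span ℝ {v} = LinearMap.ker A.mulVecLin := by
      apply Submodule.eq_of_le_of_finrank_eq
      · rw [Submodule.span_le]; simpa using hv
      · rw [hker1, finrank_span_singleton hv0]
    obtain ⟨c, hc⟩ : ∃ c : ℝ, Cᵀ.mulVec v = c • v := by
      have h' := hspan ▸ hCv
      rw [Submodule.mem_span_singleton] at h'
      obtain ⟨a, ha⟩ := h'
      exact ⟨a, ha.symm⟩
    have h1t := congrArg Matrix.transpose h1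
    rw [Matrix.transpose_add, Matrix.transpose_mul, Matrix.transpose_mul, hA, hB] at h1t
    have happ := congrArg (fun M => Matrix.mulVec M v) h1t
    simp only [Matrix.add_mulVec, ← Matrix.mulVec_mulVec] at happ
    rw [hAv, hc] at happ
    simp only [Matrix.mulVec_smul, hc, Matrix.mulVec_zero, add_zero, smul_smul,
      Matrix.transpose_neg, Matrix.transpose_one, Matrix.neg_mulVec, Matrix.one_mulVec] at happ
    have hz : (c*c + 1) • v = 0 := by
      rw [add_smul, one_smul, happ]
      simp
    rcases smul_eq_zero.mp hz with h | h
    · nlinarith [sq_nonneg c]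
    · exact hv0 h

/-- For a skewon-free medium tensor with `κ ∘ κ = -Id`, the associated 3×3
matrix `𝒜` is nonzero and does not have rank 2 (so its rank is 1 or 3).  Equivalently,
for real symmetric 3×3 matrices `𝒜 = 𝒜ᵀ`, `ℬ = ℬᵀ` and a matrix `𝒞` satisfying
`𝒞² + 𝒜ℬ = -Id₃`, `ℬ𝒞 + 𝒞ᵀℬ = 0` and `𝒞𝒜 + 𝒜𝒞ᵀ = 0`, the matrix `𝒜` is neither zero
nor of rank 2. -/
theorem matA_rank_one_or_three :
    (∀ κ : Fin 4 → Fin 4 → Fin 4 → Fin 4 → ℝ, IsMedium κ → SkewonFree κ →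
      (∀ F, IsAlt F → ∀ i j, act κ (act κ F) i j = - F i j) →
      matA κ ≠ 0 ∧ (matA κ).rank ≠ 2) ∧
    (∀ A B C : Matrix (Fin 3) (Fin 3) ℝ, A.IsSymm → B.IsSymm →
      C * C + A * B = -1 → B * C + Cᵀ * B = 0 → C * A + A * Cᵀ = 0 →
      A ≠ 0 ∧ A.rank ≠ 2) := by
  constructor
  · intro κ hm hs h2
    obtain ⟨hA, hB, h1, h2p, h3p⟩ := part1 κ hm hs h2
    exact part2 (matA κ) (matB κ) (matC κ) hA hB h1 h2p h3p
  · intro A B C hA hB h1 h2 h3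
    exact part2 A B C hA hB h1 h2 h3

end
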